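/- arXiv:2405.13755 — 2 statements merged into one kernel-verified Lean document; each statement's English description precedes it below -/
import Mathlib

section
/- Suppose D_θ = √d/(1−γ) and choose the comparator points (λ*, π*, θ*_t) = (Φᵀμ^{π*}, π*, θ^{π_t}) for t = 1,…,T, where μ^{π*} is the occupancy measure induced by a policy π* and θ^{π_t} is the parameter vector of q^{π_t}, i.e. q^{π_t} = Φθ^{π_t}. Then the dynamic duality gap equals the expected suboptimality of the randomly chosen iterate: E_J[⟨μ^{π*} − μ^{π_J}, r⟩] = 𝔊_T(Φᵀμ^{π*}, π*, {θ^{π_t}}_{t=1}^T), where J ~ Uniform{1,…,T}. -/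
noncomputable section
open MeasureTheory Finset Matrix
open scoped BigOperators ENNReal

namespace Paper

variable {X A : Type*}

/-- Euclidean dot product on `Fin d → ℝ`. -/
def dotp {d : ℕ} (u v : Fin d → ℝ) : ℝ := ∑ i, u i * v i

/-- Euclidean norm on `Fin d → ℝ`. -/
def nrm2 {d : ℕ} (u : Fin d → ℝ) : ℝ := Real.sqrt (∑ i, (u i) ^ 2)

/-- Squared weighted norm `uᵀ M u`. -/
def wnormSq {d : ℕ} (M : Matrix (Fin d) (Fin d) ℝ) (u : Fin d → ℝ) : ℝ := dotp u (M.mulVec u)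

/-- Kullback–Leibler divergence between finitely supported distributions. -/
def KLdiv [Fintype A] (p q : A → ℝ) : ℝ := ∑ a, p a * Real.log (p a / q a)

/-- A stochastic policy. -/
def IsPolicy [Fintype A] (π : X → A → ℝ) : Prop :=
  (∀ x a, 0 ≤ π x a) ∧ (∀ x, ∑ a, π x a = 1)

/-- A probability distribution over a finite set. -/
def IsDist [Fintype X] (ν : X → ℝ) : Prop := (∀ x, 0 ≤ ν x) ∧ ∑ x, ν x = 1

/-- A transition kernel. -/
def IsKernel [Fintype X] (p : X → A → X → ℝ) : Prop :=
  (∀ x a x', 0 ≤ p x a x') ∧ (∀ x a, ∑ x', p x a x' = 1)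

/-- The softmax policy associated with parameter vector `θ`. -/
def softmax [Fintype A] {d : ℕ} (φ : X → A → Fin d → ℝ) (θ : Fin d → ℝ) (x : X) (a : A) : ℝ :=
  Real.exp (dotp (φ x a) θ) / ∑ a', Real.exp (dotp (φ x a') θ)

/-- State-action distribution at step `k` of the process started from `ν₀` and following `π`. -/
def trajDist [Fintype X] [Fintype A] (p : X → A → X → ℝ) (ν₀ : X → ℝ) (π : X → A → ℝ) :
    ℕ → X → A → ℝ
  | 0 => fun x a => ν₀ x * π x a
  | k + 1 => fun x a => (∑ x', ∑ a', trajDist p ν₀ π k x' a' * p x' a' x) * π x a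

/-- Normalized discounted state-action occupancy measure of policy `π`. -/
def occupancy [Fintype X] [Fintype A] (γ : ℝ) (p : X → A → X → ℝ) (ν₀ : X → ℝ)
    (π : X → A → ℝ) (x : X) (a : A) : ℝ :=
  (1 - γ) * ∑' k : ℕ, γ ^ k * trajDist p ν₀ π k x a

/-- `k`-step state transition kernel of the Markov chain induced by policy `π`. -/
def kernelPow [Fintype X] [Fintype A] [DecidableEq X] (p : X → A → X → ℝ) (π : X → A → ℝ) :
    ℕ → X → X → ℝ
  | 0 => fun x y => if x = y then 1 else 0
  | k + 1 => fun x y => ∑ z, kernelPow p π k x z * ∑ a, π z a * p z a y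

/-- The value function of policy `π`. -/
def vval [Fintype X] [Fintype A] [DecidableEq X] (γ : ℝ) (r : X → A → ℝ) (p : X → A → X → ℝ)
    (π : X → A → ℝ) (x : X) : ℝ :=
  ∑' k : ℕ, γ ^ k * ∑ y, kernelPow p π k x y * ∑ a, π y a * r y a

/-- The action-value function of policy `π`. -/
def qval [Fintype X] [Fintype A] [DecidableEq X] (γ : ℝ) (r : X → A → ℝ) (p : X → A → X → ℝ)
    (π : X → A → ℝ) (x : X) (a : A) : ℝ :=
  r x a + γ * ∑ x', p x a x' * vval γ r p π x'

/-- The normalized discounted return of policy `π`. -/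
def ret [Fintype X] [Fintype A] (γ : ℝ) (p : X → A → X → ℝ) (ν₀ : X → ℝ) (r : X → A → ℝ)
    (π : X → A → ℝ) : ℝ := ∑ x, ∑ a, occupancy γ p ν₀ π x a * r x a

/-- The parametrized value-function candidate `v_{θ,π}`. -/
def vparam [Fintype A] {d : ℕ} (φ : X → A → Fin d → ℝ) (θ : Fin d → ℝ) (π : X → A → ℝ)
    (x : X) : ℝ := ∑ a, π x a * dotp θ (φ x a)

/-- `Ψ v`, where `Ψ` is the matrix with columns `ψ x`. -/
def psiApply [Fintype X] {d : ℕ} (ψ : X → Fin d → ℝ) (v : X → ℝ) : Fin d → ℝ :=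
  ∑ x, v x • ψ x

/-- `Φᵀ μ`, the feature occupancy of a state-action measure `μ`. -/
def featOcc [Fintype X] [Fintype A] {d : ℕ} (φ : X → A → Fin d → ℝ) (μ : X → A → ℝ) :
    Fin d → ℝ := ∑ x, ∑ a, μ x a • φ x a

/-- The parametrized occupancy candidate `μ_{λ,π}` built from columns `ψh`. -/
def muOf [Fintype X] {d : ℕ} (γ : ℝ) (ν₀ : X → ℝ) (ψh : X → Fin d → ℝ) (lam : Fin d → ℝ)
    (π : X → A → ℝ) (x : X) (a : A) : ℝ :=
  π x a * ((1 - γ) * ν₀ x + γ * dotp (ψh x) lam)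

/-- The reduced Lagrangian `f(λ, π; θ)`. -/
def lag [Fintype X] [Fintype A] {d : ℕ} (γ : ℝ) (ν₀ : X → ℝ) (omg : Fin d → ℝ)
    (ψ : X → Fin d → ℝ) (φ : X → A → Fin d → ℝ) (lam θv : Fin d → ℝ) (π : X → A → ℝ) : ℝ :=
  (1 - γ) * ∑ x, ν₀ x * vparam φ θv π x
    + dotp lam (omg + γ • psiApply ψ (vparam φ θv π) - θv)

/-- The regularized empirical covariance matrix `Λ̂`. -/
def covMat {d n : ℕ} (β : ℝ) (φi : Fin n → Fin d → ℝ) : Matrix (Fin d) (Fin d) ℝ :=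
  β • (1 : Matrix (Fin d) (Fin d) ℝ) + (n : ℝ)⁻¹ • ∑ i, vecMulVec (φi i) (φi i)

/-- `Ψ̂ v`, where `Ψ̂` is the least-squares estimator of `Ψ`. -/
def psiHatApply {X : Type*} {d n : ℕ} (β : ℝ) (φi : Fin n → Fin d → ℝ)
    (xs : Fin n → X) (v : X → ℝ) : Fin d → ℝ :=
  (covMat β φi)⁻¹.mulVec ((n : ℝ)⁻¹ • ∑ i, v (xs i) • φi i)

/-- `ψ̂ x`, the column of the least-squares estimator `Ψ̂` at state `x`. -/
def psiHatCol {X : Type*} [DecidableEq X] {d n : ℕ} (β : ℝ) (φi : Fin n → Fin d → ℝ)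
    (xs : Fin n → X) (x : X) : Fin d → ℝ :=
  (covMat β φi)⁻¹.mulVec ((n : ℝ)⁻¹ • ∑ i, (if xs i = x then (1 : ℝ) else 0) • φi i)


section Aux

lemma dotp_eq {d : ℕ} (u v : Fin d → ℝ) : dotp u v = u ⬝ᵥ v := rfl

variable {X A : Type*} [Fintype X] [Fintype A] [DecidableEq X]
variable {γ : ℝ} {p : X → A → X → ℝ} {r : X → A → ℝ} {ν₀ : X → ℝ} {π : X → A → ℝ}

lemma summable_aux {γ : ℝ} (h0 : 0 < γ) (h1 : γ < 1) {f : ℕ → ℝ}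
    (hf0 : ∀ k, 0 ≤ f k) (hf1 : ∀ k, f k ≤ 1) :
    Summable (fun k => γ ^ k * f k) := by
  refine Summable.of_nonneg_of_le (fun k => mul_nonneg (pow_nonneg h0.le k) (hf0 k))
    (fun k => ?_) (summable_geometric_of_lt_one h0.le h1)
  calc γ ^ k * f k ≤ γ ^ k * 1 := mul_le_mul_of_nonneg_left (hf1 k) (pow_nonneg h0.le k)
    _ = γ ^ k := mul_one _

lemma kernelPow_nonneg (hp : IsKernel p) (hπ : IsPolicy π) (k : ℕ) (x y : X) :
    0 ≤ kernelPow p π k x y := by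
  induction k generalizing x y with
  | zero => simp only [kernelPow]; split <;> norm_num
  | succ k ih =>
    exact Finset.sum_nonneg fun z _ => mul_nonneg (ih x z)
      (Finset.sum_nonneg fun a _ => mul_nonneg (hπ.1 z a) (hp.1 z a y))

lemma kernelPow_rowsum (hp : IsKernel p) (hπ : IsPolicy π) (k : ℕ) (x : X) :
    ∑ y, kernelPow p π k x y = 1 := by
  induction k generalizing x with
  | zero => simp [kernelPow]
  | succ k ih =>
    simp only [kernelPow]
    rw [Finset.sum_comm]
    have : ∀ z : X, ∑ y, kernelPow p π k x z * ∑ a, π z a * p z a y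
        = kernelPow p π k x z := by
      intro z
      rw [← Finset.mul_sum, Finset.sum_comm]
      have : ∑ a, ∑ y, π z a * p z a y = 1 := by
        have := hπ.2 z
        calc ∑ a, ∑ y, π z a * p z a y = ∑ a, π z a * ∑ y, p z a y := by
              exact Finset.sum_congr rfl fun a _ => (Finset.mul_sum _ _ _).symm
          _ = ∑ a, π z a := by
              exact Finset.sum_congr rfl fun a _ => by rw [hp.2 z a, mul_one]
          _ = 1 := hπ.2 z
      rw [this, mul_one]
    rw [Finset.sum_congr rfl fun z _ => this z]
    exact ih x

lemma kernelPow_le_one (hp : IsKernel p) (hπ : IsPolicy π) (k : ℕ) (x y : X) :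
    kernelPow p π k x y ≤ 1 := by
  rw [← kernelPow_rowsum hp hπ k x]
  exact Finset.single_le_sum (fun z _ => kernelPow_nonneg hp hπ k x z) (Finset.mem_univ y)

lemma kernelPow_succ_left (k : ℕ) (x y : X) :
    kernelPow p π (k + 1) x y
      = ∑ z, (∑ a, π x a * p x a z) * kernelPow p π k z y := by
  induction k generalizing x y with
  | zero =>
    simp [kernelPow, mul_comm]
  | succ k ih =>
    calc kernelPow p π (k + 2) x y
        = ∑ z, kernelPow p π (k + 1) x z * ∑ a, π z a * p z a y := rfl
      _ = ∑ z, (∑ w, (∑ a, π x a * p x a w) * kernelPow p π k w z) * ∑ a, π z a * p z a y := by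
          exact Finset.sum_congr rfl fun z _ => by rw [ih]
      _ = ∑ z, ∑ w, (∑ a, π x a * p x a w) * kernelPow p π k w z * ∑ a, π z a * p z a y := by
          exact Finset.sum_congr rfl fun z _ => Finset.sum_mul _ _ _
      _ = ∑ w, ∑ z, (∑ a, π x a * p x a w) * kernelPow p π k w z * ∑ a, π z a * p z a y :=
          Finset.sum_comm
      _ = ∑ w, (∑ a, π x a * p x a w) * ∑ z, kernelPow p π k w z * ∑ a, π z a * p z a y := by
          refine Finset.sum_congr rfl fun w _ => ?_
          rw [Finset.mul_sum]
          exact Finset.sum_congr rfl fun z _ => by ring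
      _ = ∑ z, (∑ a, π x a * p x a z) * kernelPow p π (k + 1) z y := rfl

lemma traj_eq (k : ℕ) (x : X) (a : A) :
    trajDist p ν₀ π k x a = (∑ x₀, ν₀ x₀ * kernelPow p π k x₀ x) * π x a := by
  induction k generalizing x a with
  | zero =>
    simp [trajDist, kernelPow, mul_ite, Finset.sum_ite_eq]
  | succ k ih =>
    simp only [trajDist, kernelPow]
    congr 1
    calc ∑ x', ∑ a', trajDist p ν₀ π k x' a' * p x' a' x
        = ∑ x', (∑ x₀, ν₀ x₀ * kernelPow p π k x₀ x') * ∑ a', π x' a' * p x' a' x := by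
          refine Finset.sum_congr rfl fun x' _ => ?_
          rw [Finset.mul_sum]
          exact Finset.sum_congr rfl fun a' _ => by rw [ih]; ring
      _ = ∑ x', ∑ x₀, ν₀ x₀ * kernelPow p π k x₀ x' * ∑ a', π x' a' * p x' a' x := by
          exact Finset.sum_congr rfl fun x' _ => by rw [Finset.sum_mul]
      _ = ∑ x₀, ν₀ x₀ * ∑ x', kernelPow p π k x₀ x' * ∑ a', π x' a' * p x' a' x := by
          rw [Finset.sum_comm]
          exact Finset.sum_congr rfl fun x₀ _ => by rw [Finset.mul_sum]; exact Finset.sum_congr rfl fun x' _ => by ring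

lemma trajDist_nonneg (hp : IsKernel p) (hν₀ : IsDist ν₀) (hπ : IsPolicy π)
    (k : ℕ) (x : X) (a : A) : 0 ≤ trajDist p ν₀ π k x a := by
  rw [traj_eq]
  exact mul_nonneg (Finset.sum_nonneg fun x₀ _ =>
    mul_nonneg (hν₀.1 x₀) (kernelPow_nonneg hp hπ k x₀ x)) (hπ.1 x a)

lemma pi_le_one (hπ : IsPolicy π) (x : X) (a : A) : π x a ≤ 1 := by
  rw [← hπ.2 x]
  exact Finset.single_le_sum (fun a' _ => hπ.1 x a') (Finset.mem_univ a)

lemma trajDist_le_one (hp : IsKernel p) (hν₀ : IsDist ν₀) (hπ : IsPolicy π)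
    (k : ℕ) (x : X) (a : A) : trajDist p ν₀ π k x a ≤ 1 := by
  rw [traj_eq]
  have h1 : ∑ x₀, ν₀ x₀ * kernelPow p π k x₀ x ≤ 1 := by
    calc ∑ x₀, ν₀ x₀ * kernelPow p π k x₀ x ≤ ∑ x₀, ν₀ x₀ * 1 :=
          Finset.sum_le_sum fun x₀ _ =>
            mul_le_mul_of_nonneg_left (kernelPow_le_one hp hπ k x₀ x) (hν₀.1 x₀)
      _ = 1 := by simp [hν₀.2]
  have h0 : 0 ≤ ∑ x₀, ν₀ x₀ * kernelPow p π k x₀ x :=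
    Finset.sum_nonneg fun x₀ _ => mul_nonneg (hν₀.1 x₀) (kernelPow_nonneg hp hπ k x₀ x)
  calc (∑ x₀, ν₀ x₀ * kernelPow p π k x₀ x) * π x a ≤ 1 * 1 :=
        mul_le_mul h1 (pi_le_one hπ x a) (hπ.1 x a) zero_le_one
    _ = 1 := one_mul 1

/-- `g k x = ∑ y, K^k(x,y) w(y)`, so that `vval x = ∑' k, γ^k * g k x`. -/
def gfun (p : X → A → X → ℝ) (π : X → A → ℝ) (r : X → A → ℝ) (k : ℕ) (x : X) : ℝ :=
  ∑ y, kernelPow p π k x y * ∑ a, π y a * r y a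

lemma gfun_nonneg (hp : IsKernel p) (hr01 : ∀ x a, r x a ∈ Set.Icc (0:ℝ) 1)
    (hπ : IsPolicy π) (k : ℕ) (x : X) : 0 ≤ gfun p π r k x :=
  Finset.sum_nonneg fun y _ => mul_nonneg (kernelPow_nonneg hp hπ k x y)
    (Finset.sum_nonneg fun a _ => mul_nonneg (hπ.1 y a) (hr01 y a).1)

lemma gfun_le_one (hp : IsKernel p) (hr01 : ∀ x a, r x a ∈ Set.Icc (0:ℝ) 1)
    (hπ : IsPolicy π) (k : ℕ) (x : X) : gfun p π r k x ≤ 1 := by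
  have hw : ∀ y : X, ∑ a, π y a * r y a ≤ 1 := by
    intro y
    calc ∑ a, π y a * r y a ≤ ∑ a, π y a * 1 :=
          Finset.sum_le_sum fun a _ => mul_le_mul_of_nonneg_left (hr01 y a).2 (hπ.1 y a)
      _ = 1 := by simp [hπ.2 y]
  have hw0 : ∀ y : X, 0 ≤ ∑ a, π y a * r y a := fun y =>
    Finset.sum_nonneg fun a _ => mul_nonneg (hπ.1 y a) (hr01 y a).1
  calc gfun p π r k x ≤ ∑ y, kernelPow p π k x y * 1 :=
        Finset.sum_le_sum fun y _ =>
          mul_le_mul_of_nonneg_left (hw y) (kernelPow_nonneg hp hπ k x y)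
    _ = 1 := by simp [kernelPow_rowsum hp hπ k x]

lemma vval_eq_tsum (x : X) : vval γ r p π x = ∑' k : ℕ, γ ^ k * gfun p π r k x := rfl

lemma summable_gfun (hγ : γ ∈ Set.Ioo (0:ℝ) 1) (hp : IsKernel p)
    (hr01 : ∀ x a, r x a ∈ Set.Icc (0:ℝ) 1) (hπ : IsPolicy π) (x : X) :
    Summable (fun k => γ ^ k * gfun p π r k x) :=
  summable_aux hγ.1 hγ.2 (fun k => gfun_nonneg hp hr01 hπ k x)
    (fun k => gfun_le_one hp hr01 hπ k x)

lemma summable_traj (hγ : γ ∈ Set.Ioo (0:ℝ) 1) (hp : IsKernel p) (hν₀ : IsDist ν₀)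
    (hπ : IsPolicy π) (x : X) (a : A) :
    Summable (fun k => γ ^ k * trajDist p ν₀ π k x a) :=
  summable_aux hγ.1 hγ.2 (fun k => trajDist_nonneg hp hν₀ hπ k x a)
    (fun k => trajDist_le_one hp hν₀ hπ k x a)

lemma vval_bellman (hγ : γ ∈ Set.Ioo (0:ℝ) 1) (hp : IsKernel p)
    (hr01 : ∀ x a, r x a ∈ Set.Icc (0:ℝ) 1) (hπ : IsPolicy π) (x : X) :
    vval γ r p π x = ∑ a, π x a * (r x a + γ * ∑ x', p x a x' * vval γ r p π x') := by
  have hs := summable_gfun hγ hp hr01 hπ (γ := γ) (r := r)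
  rw [vval_eq_tsum, Summable.tsum_eq_zero_add (hs x)]
  have hg0 : gfun p π r 0 x = ∑ a, π x a * r x a := by
    simp [gfun, kernelPow, ite_mul, Finset.sum_ite_eq]
  have hstep : ∀ k : ℕ, γ ^ (k + 1) * gfun p π r (k + 1) x
      = ∑ z, (∑ a, π x a * p x a z) * (γ * (γ ^ k * gfun p π r k z)) := by
    intro k
    have : gfun p π r (k + 1) x = ∑ z, (∑ a, π x a * p x a z) * gfun p π r k z := by
      unfold gfun
      calc ∑ y, kernelPow p π (k+1) x y * ∑ a, π y a * r y a
          = ∑ y, (∑ z, (∑ a, π x a * p x a z) * kernelPow p π k z y) * ∑ a, π y a * r y a := by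
            exact Finset.sum_congr rfl fun y _ => by rw [kernelPow_succ_left]
        _ = ∑ y, ∑ z, (∑ a, π x a * p x a z) * kernelPow p π k z y * ∑ a, π y a * r y a := by
            exact Finset.sum_congr rfl fun y _ => by rw [Finset.sum_mul]
        _ = ∑ z, (∑ a, π x a * p x a z) * ∑ y, kernelPow p π k z y * ∑ a, π y a * r y a := by
            rw [Finset.sum_comm]
            exact Finset.sum_congr rfl fun z _ => by
              rw [Finset.mul_sum]; exact Finset.sum_congr rfl fun y _ => by ring
    rw [this, Finset.mul_sum]
    exact Finset.sum_congr rfl fun z _ => by ring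
  rw [tsum_congr hstep]
  rw [Summable.tsum_finsetSum (fun z _ => (((hs z).mul_left γ).mul_left _))]
  have : ∀ z : X, ∑' k : ℕ, (∑ a, π x a * p x a z) * (γ * (γ ^ k * gfun p π r k z))
      = (∑ a, π x a * p x a z) * (γ * vval γ r p π z) := by
    intro z
    rw [tsum_mul_left, tsum_mul_left, vval_eq_tsum]
  rw [Finset.sum_congr rfl fun z _ => this z, hg0, pow_zero, one_mul]
  calc ∑ a, π x a * r x a + ∑ z, (∑ a, π x a * p x a z) * (γ * vval γ r p π z)
      = ∑ a, π x a * r x a + ∑ a, ∑ z, π x a * p x a z * (γ * vval γ r p π z) := by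
        congr 1
        calc ∑ z, (∑ a, π x a * p x a z) * (γ * vval γ r p π z)
            = ∑ z, ∑ a, π x a * p x a z * (γ * vval γ r p π z) :=
              Finset.sum_congr rfl fun z _ => Finset.sum_mul _ _ _
          _ = ∑ a, ∑ z, π x a * p x a z * (γ * vval γ r p π z) := Finset.sum_comm
    _ = ∑ a, π x a * (r x a + γ * ∑ x', p x a x' * vval γ r p π x') := by
        rw [← Finset.sum_add_distrib]
        refine Finset.sum_congr rfl fun a _ => ?_
        rw [mul_add]
        congr 1
        simp only [Finset.mul_sum]
        exact Finset.sum_congr rfl fun z _ => by ring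

lemma occupancy_flow (hγ : γ ∈ Set.Ioo (0:ℝ) 1) (hp : IsKernel p) (hν₀ : IsDist ν₀)
    (hπ : IsPolicy π) (x : X) (a : A) :
    occupancy γ p ν₀ π x a
      = π x a * ((1 - γ) * ν₀ x
          + γ * ∑ x', ∑ a', occupancy γ p ν₀ π x' a' * p x' a' x) := by
  have hs := fun x a => summable_traj hγ hp hν₀ hπ x a (γ := γ)
  have key : ∑' k : ℕ, γ ^ k * trajDist p ν₀ π k x a
      = ν₀ x * π x a
        + γ * π x a * ∑ x', ∑ a',
            (∑' k : ℕ, γ ^ k * trajDist p ν₀ π k x' a') * p x' a' x := by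
    rw [Summable.tsum_eq_zero_add (hs x a)]
    congr 1
    · simp [trajDist]
    have h1 : ∀ k : ℕ, γ ^ (k + 1) * trajDist p ν₀ π (k + 1) x a
        = ∑ x', ∑ a', γ * π x a * ((γ ^ k * trajDist p ν₀ π k x' a') * p x' a' x) := by
      intro k
      simp only [trajDist]
      rw [show γ ^ (k + 1) * ((∑ x', ∑ a', trajDist p ν₀ π k x' a' * p x' a' x) * π x a)
          = γ * π x a * (γ ^ k * ∑ x', ∑ a', trajDist p ν₀ π k x' a' * p x' a' x) by ring]
      simp only [Finset.mul_sum]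
      exact Finset.sum_congr rfl fun x' _ => Finset.sum_congr rfl fun a' _ => by ring
    rw [tsum_congr h1]
    rw [Summable.tsum_finsetSum (fun x' _ => summable_sum fun a' _ =>
      (((hs x' a').mul_right _).mul_left _))]
    rw [Finset.mul_sum]
    refine Finset.sum_congr rfl fun x' _ => ?_
    rw [Summable.tsum_finsetSum (fun a' _ => ((hs x' a').mul_right _).mul_left _), Finset.mul_sum]
    refine Finset.sum_congr rfl fun a' _ => ?_
    rw [tsum_mul_left, tsum_mul_right]
  have hocc : ∀ x' a', occupancy γ p ν₀ π x' a'
      = (1 - γ) * ∑' k : ℕ, γ ^ k * trajDist p ν₀ π k x' a' := fun _ _ => rfl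
  rw [hocc, key]
  have : ∑ x', ∑ a', occupancy γ p ν₀ π x' a' * p x' a' x
      = (1 - γ) * ∑ x', ∑ a',
          (∑' k : ℕ, γ ^ k * trajDist p ν₀ π k x' a') * p x' a' x := by
    rw [Finset.mul_sum]
    refine Finset.sum_congr rfl fun x' _ => ?_
    rw [Finset.mul_sum]
    refine Finset.sum_congr rfl fun a' _ => ?_
    rw [hocc]; ring
  rw [this]
  ring

lemma ret_eq_vval (hγ : γ ∈ Set.Ioo (0:ℝ) 1) (hp : IsKernel p)
    (hr01 : ∀ x a, r x a ∈ Set.Icc (0:ℝ) 1) (hν₀ : IsDist ν₀) (hπ : IsPolicy π) :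
    ∑ x, ∑ a, occupancy γ p ν₀ π x a * r x a
      = (1 - γ) * ∑ x, ν₀ x * vval γ r p π x := by
  have hs := fun x a => summable_traj hγ hp hν₀ hπ x a (γ := γ)
  have hsg := fun x => summable_gfun hγ hp hr01 hπ x (γ := γ) (r := r)
  have lhs1 : ∑ x, ∑ a, occupancy γ p ν₀ π x a * r x a
      = (1 - γ) * ∑' k : ℕ, ∑ x, ∑ a, (γ ^ k * trajDist p ν₀ π k x a) * r x a := by
    rw [Summable.tsum_finsetSum (fun x _ => summable_sum fun a _ => (hs x a).mul_right _), Finset.mul_sum]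
    refine Finset.sum_congr rfl fun x _ => ?_
    rw [Summable.tsum_finsetSum (fun a _ => (hs x a).mul_right _), Finset.mul_sum]
    refine Finset.sum_congr rfl fun a _ => ?_
    rw [tsum_mul_right]
    show occupancy γ p ν₀ π x a * r x a
      = (1 - γ) * ((∑' k : ℕ, γ ^ k * trajDist p ν₀ π k x a) * r x a)
    rw [occupancy]; ring
  have rhs1 : (1 - γ) * ∑ x, ν₀ x * vval γ r p π x
      = (1 - γ) * ∑' k : ℕ, ∑ x, ν₀ x * (γ ^ k * gfun p π r k x) := by
    congr 1
    rw [Summable.tsum_finsetSum (fun x _ => (hsg x).mul_left _)]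
    refine Finset.sum_congr rfl fun x _ => ?_
    rw [tsum_mul_left, vval_eq_tsum]
  rw [lhs1, rhs1]
  congr 1
  refine tsum_congr fun k => ?_
  calc ∑ x, ∑ a, (γ ^ k * trajDist p ν₀ π k x a) * r x a
      = γ ^ k * ∑ x, ∑ a, trajDist p ν₀ π k x a * r x a := by
        rw [Finset.mul_sum]
        exact Finset.sum_congr rfl fun x _ => by
          rw [Finset.mul_sum]; exact Finset.sum_congr rfl fun a _ => by ring
    _ = γ ^ k * ∑ x, ν₀ x * gfun p π r k x := by
        congr 1
        calc ∑ x, ∑ a, trajDist p ν₀ π k x a * r x a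
            = ∑ x, (∑ x₀, ν₀ x₀ * kernelPow p π k x₀ x) * ∑ a, π x a * r x a := by
              refine Finset.sum_congr rfl fun x _ => ?_
              rw [Finset.mul_sum]
              exact Finset.sum_congr rfl fun a _ => by rw [traj_eq]; ring
          _ = ∑ x, ∑ x₀, ν₀ x₀ * kernelPow p π k x₀ x * ∑ a, π x a * r x a := by
              exact Finset.sum_congr rfl fun x _ => by rw [Finset.sum_mul]
          _ = ∑ x₀, ν₀ x₀ * gfun p π r k x₀ := by
              rw [Finset.sum_comm]
              refine Finset.sum_congr rfl fun x₀ _ => ?_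
              rw [gfun, Finset.mul_sum]
              exact Finset.sum_congr rfl fun x _ => by ring
    _ = ∑ x, ν₀ x * (γ ^ k * gfun p π r k x) := by
        rw [Finset.mul_sum]
        exact Finset.sum_congr rfl fun x _ => by ring

lemma dotp_sum_left' {ι : Type*} {d : ℕ} (s : Finset ι) (f : ι → Fin d → ℝ)
    (u : Fin d → ℝ) : (∑ i ∈ s, f i) ⬝ᵥ u = ∑ i ∈ s, f i ⬝ᵥ u := by
  simp only [dotProduct, Finset.sum_apply, Finset.sum_mul]
  exact Finset.sum_comm

lemma dotp_smul_left' {d : ℕ} (c : ℝ) (v u : Fin d → ℝ) :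
    (c • v) ⬝ᵥ u = c * (v ⬝ᵥ u) := by
  simp only [dotProduct, Pi.smul_apply, smul_eq_mul, Finset.mul_sum]
  exact Finset.sum_congr rfl fun i _ => by ring

lemma dotp_psiApply {d : ℕ} {ψ : X → Fin d → ℝ} (u : Fin d → ℝ) (v : X → ℝ) :
    u ⬝ᵥ psiApply ψ v = ∑ x, v x * (u ⬝ᵥ ψ x) := by
  unfold psiApply
  rw [dotProduct_comm, dotp_sum_left']
  refine Finset.sum_congr rfl fun x _ => ?_
  rw [dotp_smul_left', dotProduct_comm]

lemma featOcc_dotp {d : ℕ} {φ : X → A → Fin d → ℝ} (μ : X → A → ℝ) (u : Fin d → ℝ) :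
    dotp (featOcc φ μ) u = ∑ x, ∑ a, μ x a * (φ x a ⬝ᵥ u) := by
  rw [dotp_eq]
  unfold featOcc
  rw [dotp_sum_left']
  refine Finset.sum_congr rfl fun x _ => ?_
  rw [dotp_sum_left']
  exact Finset.sum_congr rfl fun a _ => dotp_smul_left' _ _ _

lemma lag_featOcc {d : ℕ} {φ : X → A → Fin d → ℝ} {ψ : X → Fin d → ℝ} {omg : Fin d → ℝ}
    (hγ : γ ∈ Set.Ioo (0:ℝ) 1) (hp : IsKernel p) (hν₀ : IsDist ν₀)
    (hplin : ∀ x a x', p x a x' = dotp (φ x a) (ψ x'))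
    (hrlin : ∀ x a, r x a = dotp (φ x a) omg)
    (hπ : IsPolicy π) (θv : Fin d → ℝ) :
    lag γ ν₀ omg ψ φ (featOcc φ (occupancy γ p ν₀ π)) θv π
      = ∑ x, ∑ a, occupancy γ p ν₀ π x a * r x a := by
  set μ := occupancy γ p ν₀ π with hμdef
  set V := vparam φ θv π with hVdef
  have flow := fun x a => occupancy_flow hγ hp hν₀ hπ x a (γ := γ) (p := p) (ν₀ := ν₀)
  simp only [← hμdef] at flow
  unfold lag
  rw [dotp_eq, dotProduct_sub, dotProduct_add, dotProduct_smul,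
    smul_eq_mul, ← dotp_eq, ← dotp_eq, ← dotp_eq, featOcc_dotp, featOcc_dotp, featOcc_dotp]
  have T1 : ∑ x, ∑ a, μ x a * (φ x a ⬝ᵥ omg) = ∑ x, ∑ a, μ x a * r x a :=
    Finset.sum_congr rfl fun x _ => Finset.sum_congr rfl fun a _ => by rw [hrlin x a]; rfl
  have T2 : ∑ x, ∑ a, μ x a * (φ x a ⬝ᵥ psiApply ψ V)
      = ∑ x', (∑ x, ∑ a, μ x a * p x a x') * V x' := by
    calc ∑ x, ∑ a, μ x a * (φ x a ⬝ᵥ psiApply ψ V)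
        = ∑ x, ∑ a, ∑ x', μ x a * p x a x' * V x' := by
          refine Finset.sum_congr rfl fun x _ => Finset.sum_congr rfl fun a _ => ?_
          rw [dotp_psiApply, Finset.mul_sum]
          refine Finset.sum_congr rfl fun x' _ => ?_
          rw [hplin x a x', dotp_eq]; ring
      _ = ∑ x, ∑ x', ∑ a, μ x a * p x a x' * V x' :=
          Finset.sum_congr rfl fun x _ => Finset.sum_comm
      _ = ∑ x', ∑ x, ∑ a, μ x a * p x a x' * V x' := Finset.sum_comm
      _ = ∑ x', (∑ x, ∑ a, μ x a * p x a x') * V x' := by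
          refine Finset.sum_congr rfl fun x' _ => ?_
          rw [Finset.sum_mul]
          exact Finset.sum_congr rfl fun x _ => by rw [Finset.sum_mul]
  have T3 : ∑ x, ∑ a, μ x a * (φ x a ⬝ᵥ θv)
      = ∑ x, ((1 - γ) * ν₀ x + γ * ∑ x', ∑ a', μ x' a' * p x' a' x) * V x := by
    refine Finset.sum_congr rfl fun x _ => ?_
    rw [hVdef, vparam, Finset.mul_sum]
    refine Finset.sum_congr rfl fun a _ => ?_
    rw [flow x a, dotp_eq, dotProduct_comm]
    ring
  rw [T1, T2, T3]
  have expand : ∑ x, ((1 - γ) * ν₀ x + γ * ∑ x', ∑ a', μ x' a' * p x' a' x) * V x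
      = (1 - γ) * ∑ x, ν₀ x * V x
        + γ * ∑ x, (∑ x', ∑ a', μ x' a' * p x' a' x) * V x := by
    rw [Finset.mul_sum, Finset.mul_sum, ← Finset.sum_add_distrib]
    exact Finset.sum_congr rfl fun x _ => by ring
  rw [expand]
  have swap : ∑ x', (∑ x, ∑ a, μ x a * p x a x') * V x'
      = ∑ x, (∑ x', ∑ a', μ x' a' * p x' a' x) * V x := rfl
  rw [swap]
  ring

lemma vparam_thetastar (hγ : γ ∈ Set.Ioo (0:ℝ) 1) (hp : IsKernel p)
    (hr01 : ∀ x a, r x a ∈ Set.Icc (0:ℝ) 1) (hπ : IsPolicy π)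
    {d : ℕ} {φ : X → A → Fin d → ℝ} {ψ : X → Fin d → ℝ} {omg : Fin d → ℝ}
    (hplin : ∀ x a x', p x a x' = dotp (φ x a) (ψ x'))
    (hrlin : ∀ x a, r x a = dotp (φ x a) omg) :
    vparam φ (omg + γ • psiApply ψ (vval γ r p π)) π = vval γ r p π := by
  funext x
  rw [vval_bellman hγ hp hr01 hπ x, vparam]
  refine Finset.sum_congr rfl fun a _ => ?_
  congr 1
  rw [dotp_eq, dotProduct_comm, dotProduct_add, dotProduct_smul,
    dotp_psiApply]
  congr 1
  · rw [hrlin x a]; rfl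
  · rw [smul_eq_mul]
    congr 1
    exact Finset.sum_congr rfl fun x' _ => by rw [hplin x a x', dotp_eq]; ring

lemma lag_thetastar (hγ : γ ∈ Set.Ioo (0:ℝ) 1) (hp : IsKernel p)
    (hr01 : ∀ x a, r x a ∈ Set.Icc (0:ℝ) 1) (hν₀ : IsDist ν₀) (hπ : IsPolicy π)
    {d : ℕ} {φ : X → A → Fin d → ℝ} {ψ : X → Fin d → ℝ} {omg lamv : Fin d → ℝ}
    (hplin : ∀ x a x', p x a x' = dotp (φ x a) (ψ x'))
    (hrlin : ∀ x a, r x a = dotp (φ x a) omg) :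
    lag γ ν₀ omg ψ φ lamv (omg + γ • psiApply ψ (vval γ r p π)) π
      = ∑ x, ∑ a, occupancy γ p ν₀ π x a * r x a := by
  rw [ret_eq_vval hγ hp hr01 hν₀ hπ]
  unfold lag
  rw [vparam_thetastar hγ hp hr01 hπ hplin hrlin]
  have : omg + γ • psiApply ψ (vval γ r p π) - (omg + γ • psiApply ψ (vval γ r p π)) = 0 :=
    sub_self _
  rw [this]
  simp [dotp]

end Aux

/-- with the comparator points `(λ*, π*, θ*_t) = (Φᵀμ^{π*}, π*, θ^{π_t})`,
`θ^{π_t} = ω + γΨv^{π_t}`, and `D_θ = √d/(1−γ)`, the dynamic duality gap equals the expected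
suboptimality of the uniformly sampled output policy:
`E_J[⟨μ^{π*} − μ^{π_J}, r⟩] = 𝔊_T(Φᵀμ^{π*}, π*, {θ^{π_t}})`. -/
theorem statement1 {X A : Type*} [Fintype X] [Fintype A] [DecidableEq X] {d : ℕ} (T : ℕ)
    (γ : ℝ) (hγ : γ ∈ Set.Ioo (0 : ℝ) 1)
    (p : X → A → X → ℝ) (hp : IsKernel p)
    (r : X → A → ℝ) (hr01 : ∀ x a, r x a ∈ Set.Icc (0 : ℝ) 1)
    (ν₀ : X → ℝ) (hν₀ : IsDist ν₀)
    (φ : X → A → Fin d → ℝ) (ψ : X → Fin d → ℝ) (omg : Fin d → ℝ)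
    (hplin : ∀ x a x', p x a x' = dotp (φ x a) (ψ x'))
    (hrlin : ∀ x a, r x a = dotp (φ x a) omg)
    (Dθ : ℝ) (hDθ : Dθ = Real.sqrt d / (1 - γ))
    (π : ℕ → X → A → ℝ) (hπ : ∀ t, IsPolicy (π t))
    (πstar : X → A → ℝ) (hπstar : IsPolicy πstar)
    (lam θ : ℕ → Fin d → ℝ) :
    (T : ℝ)⁻¹ * ∑ t ∈ Finset.Icc 1 T, ∑ x, ∑ a,
        (occupancy γ p ν₀ πstar x a - occupancy γ p ν₀ (π t) x a) * r x a
      = (T : ℝ)⁻¹ * ∑ t ∈ Finset.Icc 1 T,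
          (lag γ ν₀ omg ψ φ (featOcc φ (occupancy γ p ν₀ πstar)) (θ t) πstar
            - lag γ ν₀ omg ψ φ (lam t)
                (omg + γ • psiApply ψ (vval γ r p (π t))) (π t)) := by
  congr 1
  refine Finset.sum_congr rfl fun t _ => ?_
  rw [lag_featOcc hγ hp hν₀ hplin hrlin hπstar (θ t),
      lag_thetastar hγ hp hr01 hν₀ (hπ t) hplin hrlin]
  simp [sub_mul, Finset.sum_sub_distrib]


end Paper
end
end

section
/- Let λ₁ = 0 and C = 6β(d + D_θ²) + 3d(1 + R D_θ)² + 3γ² d R² D_θ². Then the regret of the λ-player against any comparator λ* ∈ ℝ^d satisfies (1/T)∑_{t=1}^T ⟨λ* − λ_t, ω + γΨ̂v_{θ_t,π_t} − θ_t⟩ ≤ (1/(2ηT) + ϱ/2)‖λ*‖²_{Λ̂⁻¹} + ηC/2 − (ϱ/(2T))∑_{t=1}^T ‖λ_t‖²_{Λ̂⁻¹}. -/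
noncomputable section
open MeasureTheory Finset Matrix
open scoped BigOperators ENNReal

namespace Paper

variable {X A : Type*}

section AuxMD
variable {d n : ℕ}

lemma dotp_eq_dot (u v : Fin d → ℝ) : dotp u v = u ⬝ᵥ v := rfl

lemma wnormSq_eq (M : Matrix (Fin d) (Fin d) ℝ) (u : Fin d → ℝ) :
    wnormSq M u = u ⬝ᵥ M *ᵥ u := rfl

lemma dot_mulVec_comm {P : Matrix (Fin d) (Fin d) ℝ} (hsy : Pᵀ = P) (a b : Fin d → ℝ) :
    a ⬝ᵥ P *ᵥ b = b ⬝ᵥ P *ᵥ a := by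
  calc a ⬝ᵥ P *ᵥ b = a ⬝ᵥ Pᵀ *ᵥ b := by rw [hsy]
    _ = a ⬝ᵥ (b ᵥ* P) := by rw [Matrix.mulVec_transpose]
    _ = (b ᵥ* P) ⬝ᵥ a := dotProduct_comm _ _
    _ = b ⬝ᵥ P *ᵥ a := (Matrix.dotProduct_mulVec _ _ _).symm

lemma quad_add {P : Matrix (Fin d) (Fin d) ℝ} (hsy : Pᵀ = P) (a b : Fin d → ℝ) :
    (a + b) ⬝ᵥ P *ᵥ (a + b)
      = a ⬝ᵥ P *ᵥ a + 2 * (a ⬝ᵥ P *ᵥ b) + b ⬝ᵥ P *ᵥ b := by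
  have h := dot_mulVec_comm hsy b a
  simp only [Matrix.mulVec_add, add_dotProduct, dotProduct_add]
  linarith

lemma quad_sub {P : Matrix (Fin d) (Fin d) ℝ} (hsy : Pᵀ = P) (a b : Fin d → ℝ) :
    (a - b) ⬝ᵥ P *ᵥ (a - b)
      = a ⬝ᵥ P *ᵥ a - 2 * (a ⬝ᵥ P *ᵥ b) + b ⬝ᵥ P *ᵥ b := by
  have h := dot_mulVec_comm hsy b a
  simp only [Matrix.mulVec_sub, sub_dotProduct, dotProduct_sub]
  linarith

lemma quad_smul (P : Matrix (Fin d) (Fin d) ℝ) (s : ℝ) (a : Fin d → ℝ) :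
    (s • a) ⬝ᵥ P *ᵥ (s • a) = s ^ 2 * (a ⬝ᵥ P *ᵥ a) := by
  rw [Matrix.mulVec_smul, smul_dotProduct, dotProduct_smul]
  simp [smul_eq_mul]; ring

lemma quad_three {P : Matrix (Fin d) (Fin d) ℝ} (hsy : Pᵀ = P)
    (hpsd : ∀ v : Fin d → ℝ, 0 ≤ v ⬝ᵥ P *ᵥ v) (x y z : Fin d → ℝ) :
    (x + y - z) ⬝ᵥ P *ᵥ (x + y - z)
      ≤ 3 * (x ⬝ᵥ P *ᵥ x) + 3 * (y ⬝ᵥ P *ᵥ y) + 3 * (z ⬝ᵥ P *ᵥ z) := by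
  have e1 := quad_sub hsy (x + y) z
  have e2 := quad_add hsy x y
  have e3 : (x + y) ⬝ᵥ P *ᵥ z = x ⬝ᵥ P *ᵥ z + y ⬝ᵥ P *ᵥ z := by
    simp [add_dotProduct]
  have n1 := hpsd (x - y); rw [quad_sub hsy] at n1
  have n2 := hpsd (x + z); rw [quad_add hsy] at n2
  have n3 := hpsd (y + z); rw [quad_add hsy] at n3
  rw [e1, e2, e3]
  linarith

lemma sum_mulVec {s : Finset (Fin n)} (A : Fin n → Matrix (Fin d) (Fin d) ℝ) (x : Fin d → ℝ) :
    (∑ i ∈ s, A i) *ᵥ x = ∑ i ∈ s, A i *ᵥ x := by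
  funext j
  simp only [Matrix.mulVec, dotProduct, Matrix.sum_apply, Finset.sum_apply, Finset.sum_mul]
  exact Finset.sum_comm

lemma vecMulVec_mulVec (v x : Fin d → ℝ) : (vecMulVec v v) *ᵥ x = (v ⬝ᵥ x) • v := by
  funext i
  simp only [Matrix.mulVec, Matrix.vecMulVec_apply, dotProduct, Pi.smul_apply, smul_eq_mul,
    Finset.sum_mul]
  exact Finset.sum_congr rfl fun j _ => by ring

lemma covMat_mulVec (β : ℝ) (φi : Fin n → Fin d → ℝ) (x : Fin d → ℝ) :
    (covMat β φi) *ᵥ x = β • x + (n : ℝ)⁻¹ • ∑ i, (φi i ⬝ᵥ x) • φi i := by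
  unfold covMat
  rw [Matrix.add_mulVec, Matrix.smul_mulVec, Matrix.one_mulVec,
    Matrix.smul_mulVec, sum_mulVec]
  congr 1
  congr 1
  exact Finset.sum_congr rfl fun i _ => vecMulVec_mulVec _ _

lemma covMat_quad (β : ℝ) (φi : Fin n → Fin d → ℝ) (x : Fin d → ℝ) :
    x ⬝ᵥ (covMat β φi) *ᵥ x = β * (x ⬝ᵥ x) + (n : ℝ)⁻¹ * ∑ i, (φi i ⬝ᵥ x) ^ 2 := by
  rw [covMat_mulVec]
  rw [dotProduct_add, dotProduct_smul, dotProduct_smul]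
  congr 1
  rw [smul_eq_mul]
  congr 1
  rw [show x ⬝ᵥ ∑ i, (φi i ⬝ᵥ x) • φi i = ∑ i, x ⬝ᵥ ((φi i ⬝ᵥ x) • φi i) from by
    simp only [dotProduct, Finset.sum_apply, Finset.mul_sum]; exact Finset.sum_comm]
  exact Finset.sum_congr rfl fun i _ => by
    rw [dotProduct_smul, smul_eq_mul, dotProduct_comm]; ring

lemma covMat_transpose (β : ℝ) (φi : Fin n → Fin d → ℝ) :
    (covMat β φi)ᵀ = covMat β φi := by
  unfold covMat
  rw [Matrix.transpose_add, Matrix.transpose_smul, Matrix.transpose_one, Matrix.transpose_smul]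
  congr 1
  congr 1
  rw [Matrix.transpose_sum]
  exact Finset.sum_congr rfl fun i _ => by
    ext a b; simp [Matrix.vecMulVec_apply, mul_comm]

lemma covMat_posDef {β : ℝ} (hβ : 0 < β) (φi : Fin n → Fin d → ℝ) :
    (covMat β φi).PosDef := by
  refine Matrix.PosDef.of_dotProduct_mulVec_pos ?_ ?_
  · show (covMat β φi)ᴴ = _
    rw [Matrix.conjTranspose_eq_transpose_of_trivial]
    simpa using covMat_transpose β φi
  · intro x hx
    have hq := covMat_quad β φi x
    have h1 : 0 < x ⬝ᵥ x := by
      obtain ⟨i, hi⟩ := Function.ne_iff.mp hx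
      exact Finset.sum_pos' (fun j _ => mul_self_nonneg _)
        ⟨i, Finset.mem_univ i, mul_self_pos.mpr hi⟩
    have h2 : 0 ≤ (n : ℝ)⁻¹ * ∑ i, (φi i ⬝ᵥ x) ^ 2 := by positivity
    simp only [star_trivial]
    show (0:ℝ) < x ⬝ᵥ (covMat β φi) *ᵥ x
    rw [hq]; nlinarith

lemma sumSq_le_of_nrm2_le {u : Fin d → ℝ} {c : ℝ} (h : nrm2 u ≤ c) :
    ∑ i, u i ^ 2 ≤ c ^ 2 := by
  have h0 : 0 ≤ ∑ i, u i ^ 2 := Finset.sum_nonneg fun i _ => sq_nonneg _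
  calc ∑ i, u i ^ 2 = (nrm2 u) ^ 2 := (Real.sq_sqrt h0).symm
    _ ≤ c ^ 2 := pow_le_pow_left₀ (Real.sqrt_nonneg _) h 2

lemma abs_dotp_le {u v : Fin d → ℝ} {a b : ℝ} (ha : 0 ≤ a) (hb : 0 ≤ b)
    (hu : nrm2 u ≤ a) (hv : nrm2 v ≤ b) : |dotp u v| ≤ a * b := by
  have hcs : (dotp u v) ^ 2 ≤ (∑ i, u i ^ 2) * (∑ i, v i ^ 2) :=
    Finset.sum_mul_sq_le_sq_mul_sq _ _ _
  have h1 : (dotp u v) ^ 2 ≤ (a * b) ^ 2 := by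
    calc (dotp u v) ^ 2 ≤ (∑ i, u i ^ 2) * (∑ i, v i ^ 2) := hcs
      _ ≤ a ^ 2 * b ^ 2 := by
          apply mul_le_mul (sumSq_le_of_nrm2_le hu) (sumSq_le_of_nrm2_le hv)
            (Finset.sum_nonneg fun i _ => sq_nonneg _) (sq_nonneg a)
      _ = (a * b) ^ 2 := by ring
  calc |dotp u v| = Real.sqrt ((dotp u v) ^ 2) := (Real.sqrt_sq_eq_abs _).symm
    _ ≤ Real.sqrt ((a * b) ^ 2) := Real.sqrt_le_sqrt h1
    _ = a * b := Real.sqrt_sq (by positivity)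

lemma sum_Icc_telescope (f : ℕ → ℝ) (T : ℕ) :
    ∑ t ∈ Finset.Icc 1 T, (f t - f (t + 1)) = f 1 - f (T + 1) := by
  induction T with
  | zero => simp
  | succ T ih => rw [Finset.sum_Icc_succ_top (by omega), ih]; ring

lemma sum_dotProduct' (v : Fin n → Fin d → ℝ) (w : Fin d → ℝ) :
    (∑ i, v i) ⬝ᵥ w = ∑ i, v i ⬝ᵥ w := by
  simp only [dotProduct, Finset.sum_apply, Finset.sum_mul]
  exact Finset.sum_comm

lemma dot_self_eq_sumSq (x : Fin d → ℝ) : x ⬝ᵥ x = ∑ i, x i ^ 2 := by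
  simp [dotProduct, sq]

set_option maxHeartbeats 1000000 in
lemma gC_bound (hn : 0 < n) {R β γ Dθ : ℝ} (hβ : 0 < β) (hR : 0 ≤ R) (hD : 0 ≤ Dθ)
    (φi : Fin n → Fin d → ℝ) (hφn : ∀ i, nrm2 (φi i) ≤ R)
    (omg : Fin d → ℝ) (homg : nrm2 omg ≤ Real.sqrt d)
    (hrw : ∀ i, dotp (φi i) omg ∈ Set.Icc (0:ℝ) 1)
    (θv : Fin d → ℝ) (hθv : nrm2 θv ≤ Dθ)
    (c : Fin n → ℝ) (hc : ∀ i, |c i| ≤ R * Dθ)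
    (g : Fin d → ℝ)
    (hgdef : g = omg + γ • ((covMat β φi)⁻¹ *ᵥ ((n:ℝ)⁻¹ • ∑ i, c i • φi i)) - θv) :
    g ⬝ᵥ (covMat β φi) *ᵥ g
      ≤ 6*β*((d:ℝ) + Dθ^2) + 3*(d:ℝ)*(1+R*Dθ)^2 + 3*γ^2*(d:ℝ)*R^2*Dθ^2 := by
  have hn0 : (0:ℝ) < n := by exact_mod_cast hn
  rcases Nat.eq_zero_or_pos d with hd | hd
  · subst hd
    have h0 : g ⬝ᵥ (covMat β φi) *ᵥ g = 0 := by
      simp [dotProduct]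
    rw [h0]
    have : ((0:ℕ):ℝ) = 0 := by norm_num
    rw [this]
    positivity
  · have hd1 : (1:ℝ) ≤ d := by exact_mod_cast hd
    have hΛsy := covMat_transpose (d := d) (n := n) β φi
    have hΛpd := covMat_posDef (d := d) (n := n) hβ φi
    have hdet : IsUnit (covMat β φi).det := isUnit_iff_ne_zero.mpr hΛpd.det_pos.ne'
    have hΛpsd : ∀ v : Fin d → ℝ, 0 ≤ v ⬝ᵥ (covMat β φi) *ᵥ v := fun v => by
      simpa using hΛpd.posSemidef.dotProduct_mulVec_nonneg v
    set u : Fin d → ℝ := (n:ℝ)⁻¹ • ∑ i, c i • φi i with hu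
    set w : Fin d → ℝ := (covMat β φi)⁻¹ *ᵥ u with hw
    have hΛw : (covMat β φi) *ᵥ w = u := by
      rw [hw, Matrix.mulVec_mulVec, Matrix.mul_nonsing_inv _ hdet, Matrix.one_mulVec]
    have hωq : omg ⬝ᵥ (covMat β φi) *ᵥ omg ≤ β*(d:ℝ) + 1 := by
      rw [covMat_quad]
      have h1 : omg ⬝ᵥ omg ≤ (d:ℝ) := by
        have h2 := sumSq_le_of_nrm2_le homg
        rw [Real.sq_sqrt (by positivity : (0:ℝ) ≤ (d:ℝ))] at h2
        rw [dot_self_eq_sumSq]; exact h2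
      have h2 : ∑ i, (φi i ⬝ᵥ omg)^2 ≤ (n:ℝ) := by
        calc ∑ i, (φi i ⬝ᵥ omg)^2 ≤ ∑ _i : Fin n, (1:ℝ) := by
              apply Finset.sum_le_sum; intro i _
              obtain ⟨h01, h02⟩ := hrw i
              have : φi i ⬝ᵥ omg = dotp (φi i) omg := rfl
              rw [this]; nlinarith
          _ = n := by simp
      have := mul_le_mul_of_nonneg_left h2 (by positivity : (0:ℝ) ≤ (n:ℝ)⁻¹)
      have hfin : (n:ℝ)⁻¹ * (n:ℝ) = 1 := by field_simp
      nlinarith [mul_le_mul_of_nonneg_left h1 hβ.le]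
    have hθq : θv ⬝ᵥ (covMat β φi) *ᵥ θv ≤ β*Dθ^2 + R^2*Dθ^2 := by
      rw [covMat_quad]
      have h1 : θv ⬝ᵥ θv ≤ Dθ^2 := by
        rw [dot_self_eq_sumSq]; exact sumSq_le_of_nrm2_le hθv
      have h2 : ∑ i, (φi i ⬝ᵥ θv)^2 ≤ (n:ℝ) * (R^2*Dθ^2) := by
        calc ∑ i, (φi i ⬝ᵥ θv)^2 ≤ ∑ _i : Fin n, R^2*Dθ^2 := by
              apply Finset.sum_le_sum; intro i _
              have h3 := abs_dotp_le hR hD (hφn i) hθv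
              have h4 : (dotp (φi i) θv)^2 ≤ (R*Dθ)^2 := by
                rw [← sq_abs]; exact pow_le_pow_left₀ (abs_nonneg _) h3 2
              have : φi i ⬝ᵥ θv = dotp (φi i) θv := rfl
              rw [this]; nlinarith
          _ = (n:ℝ) * (R^2*Dθ^2) := by
              rw [Finset.sum_const, Finset.card_univ, Fintype.card_fin, nsmul_eq_mul]
      have h5 := mul_le_mul_of_nonneg_left h2 (by positivity : (0:ℝ) ≤ (n:ℝ)⁻¹)
      have hfin : (n:ℝ)⁻¹ * ((n:ℝ) * (R^2*Dθ^2)) = R^2*Dθ^2 := by field_simp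
      nlinarith [mul_le_mul_of_nonneg_left h1 hβ.le]
    have hwq : w ⬝ᵥ (covMat β φi) *ᵥ w ≤ R^2*Dθ^2 := by
      have hτ0 : 0 ≤ w ⬝ᵥ (covMat β φi) *ᵥ w := hΛpsd w
      have hτsum : w ⬝ᵥ (covMat β φi) *ᵥ w = (n:ℝ)⁻¹ * ∑ i, c i * (φi i ⬝ᵥ w) := by
        rw [hΛw, dotProduct_comm, hu, smul_dotProduct, sum_dotProduct', smul_eq_mul]
        congr 1
        exact Finset.sum_congr rfl fun i _ => by
          rw [smul_dotProduct, smul_eq_mul]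
      have hq2 : (n:ℝ)⁻¹ * ∑ i, (φi i ⬝ᵥ w)^2 ≤ w ⬝ᵥ (covMat β φi) *ᵥ w := by
        have h6 := covMat_quad β φi w
        have hww : 0 ≤ w ⬝ᵥ w := by
          rw [dot_self_eq_sumSq]; exact Finset.sum_nonneg fun i _ => sq_nonneg _
        nlinarith [mul_nonneg hβ.le hww]
      have hK0 : (0:ℝ) ≤ R^2*Dθ^2 := by positivity
      have hc2 : ∑ i, (c i)^2 ≤ (n:ℝ)*(R^2*Dθ^2) := by
        calc ∑ i, (c i)^2 ≤ ∑ _i : Fin n, R^2*Dθ^2 := by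
              apply Finset.sum_le_sum; intro i _
              have := hc i
              nlinarith [abs_nonneg (c i), sq_abs (c i)]
          _ = (n:ℝ)*(R^2*Dθ^2) := by
              rw [Finset.sum_const, Finset.card_univ, Fintype.card_fin, nsmul_eq_mul]
      have hcs : (∑ i, c i * (φi i ⬝ᵥ w))^2
          ≤ (∑ i, (c i)^2) * (∑ i, (φi i ⬝ᵥ w)^2) :=
        Finset.sum_mul_sq_le_sq_mul_sq _ _ _
      have hsq0 : (0:ℝ) ≤ ∑ i, (φi i ⬝ᵥ w)^2 := Finset.sum_nonneg fun i _ => sq_nonneg _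
      set τ := w ⬝ᵥ (covMat β φi) *ᵥ w with hτ
      have hτ2 : τ^2 ≤ (R^2*Dθ^2) * τ := by
        calc τ^2 = (n:ℝ)⁻¹ * (n:ℝ)⁻¹ * (∑ i, c i * (φi i ⬝ᵥ w))^2 := by
              rw [hτsum]; ring
          _ ≤ (n:ℝ)⁻¹ * (n:ℝ)⁻¹ * ((∑ i, (c i)^2) * (∑ i, (φi i ⬝ᵥ w)^2)) := by
              apply mul_le_mul_of_nonneg_left hcs (by positivity)
          _ ≤ (n:ℝ)⁻¹ * (n:ℝ)⁻¹ * (((n:ℝ)*(R^2*Dθ^2)) * (∑ i, (φi i ⬝ᵥ w)^2)) := by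
              apply mul_le_mul_of_nonneg_left (mul_le_mul_of_nonneg_right hc2 hsq0)
                (by positivity)
          _ = (R^2*Dθ^2) * ((n:ℝ)⁻¹ * ∑ i, (φi i ⬝ᵥ w)^2) := by
              field_simp
          _ ≤ (R^2*Dθ^2) * τ := mul_le_mul_of_nonneg_left hq2 hK0
      nlinarith [hτ2, hτ0, hK0]
    rw [hgdef]
    have h3 := quad_three hΛsy hΛpsd omg (γ • w) θv
    rw [quad_smul] at h3
    have hγ2 : γ^2 * (w ⬝ᵥ (covMat β φi) *ᵥ w) ≤ γ^2 * (R^2*Dθ^2) :=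
      mul_le_mul_of_nonneg_left hwq (sq_nonneg γ)
    nlinarith [h3, hωq, hθq, hγ2, hd1, hβ.le, mul_nonneg hR hD,
      mul_nonneg (sub_nonneg.mpr hd1) (sq_nonneg (1+R*Dθ)),
      mul_nonneg (mul_nonneg (sq_nonneg γ) (mul_nonneg (sq_nonneg R) (sq_nonneg Dθ)))
        (sub_nonneg.mpr hd1),
      mul_nonneg hβ.le (sq_nonneg Dθ),
      mul_nonneg hβ.le (le_trans zero_le_one hd1)]

end AuxMD

set_option maxHeartbeats 2000000

/-- regret of the `λ`-player under the stabilized mirror-ascent update: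
`(1/T)𝔑_T(λ*) ≤ (1/(2ηT) + ϱ/2)‖λ*‖²_{Λ̂⁻¹} + ηC/2 − (ϱ/(2T))∑ₜ‖λ_t‖²_{Λ̂⁻¹}`. -/
theorem statement4 {X A : Type*} [Fintype X] [Fintype A] {d n : ℕ} (hn : 0 < n)
    (T : ℕ) (hT : 1 ≤ T)
    (R β γ Dθ η ϱ : ℝ) (hβ : 0 < β) (hγ : γ ∈ Set.Ioo (0 : ℝ) 1) (hη : 0 < η) (hϱ : 0 < ϱ)
    (φ : X → A → Fin d → ℝ) (hφ : ∀ x a, nrm2 (φ x a) ≤ R)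
    (omg : Fin d → ℝ) (homg : nrm2 omg ≤ Real.sqrt d)
    (Xi : Fin n → X) (Ai : Fin n → A) (Xs : Fin n → X)
    (hrw : ∀ i, dotp (φ (Xi i) (Ai i)) omg ∈ Set.Icc (0 : ℝ) 1)
    (θ : ℕ → Fin d → ℝ) (hθ : ∀ t, nrm2 (θ t) ≤ Dθ)
    (π : ℕ → X → A → ℝ) (hπ : ∀ t, IsPolicy (π t))
    (g : ℕ → Fin d → ℝ)
    (hg : ∀ t, g t = omg + γ • psiHatApply β (fun i => φ (Xi i) (Ai i)) Xs
        (vparam φ (θ t) (π t)) - θ t)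
    (lam : ℕ → Fin d → ℝ) (hlam1 : lam 1 = 0)
    (hupd : ∀ t, 1 ≤ t → ∀ z : Fin d → ℝ,
      -dotp (lam (t + 1)) (g t)
          + (2 * η)⁻¹ * wnormSq (covMat β (fun i => φ (Xi i) (Ai i)))⁻¹ (lam (t + 1) - lam t)
          + ϱ / 2 * wnormSq (covMat β (fun i => φ (Xi i) (Ai i)))⁻¹ (lam (t + 1))
        ≤ -dotp z (g t)
          + (2 * η)⁻¹ * wnormSq (covMat β (fun i => φ (Xi i) (Ai i)))⁻¹ (z - lam t)
          + ϱ / 2 * wnormSq (covMat β (fun i => φ (Xi i) (Ai i)))⁻¹ z)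
    (lamstar : Fin d → ℝ) :
    (T : ℝ)⁻¹ * ∑ t ∈ Finset.Icc 1 T, dotp (lamstar - lam t) (g t)
      ≤ ((2 * η * T)⁻¹ + ϱ / 2) * wnormSq (covMat β (fun i => φ (Xi i) (Ai i)))⁻¹ lamstar
        + η * (6 * β * (d + Dθ ^ 2) + 3 * d * (1 + R * Dθ) ^ 2
            + 3 * γ ^ 2 * d * R ^ 2 * Dθ ^ 2) / 2
        - ϱ / (2 * T) * ∑ t ∈ Finset.Icc 1 T,
            wnormSq (covMat β (fun i => φ (Xi i) (Ai i)))⁻¹ (lam t) := by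

  obtain ⟨hγ0, hγ1⟩ := hγ
  have hT0 : (0:ℝ) < T := by exact_mod_cast hT
  have hR0 : 0 ≤ R := (Real.sqrt_nonneg _).trans (hφ (Xi ⟨0, hn⟩) (Ai ⟨0, hn⟩))
  have hD0 : 0 ≤ Dθ := (Real.sqrt_nonneg _).trans (hθ 0)
  set φi : Fin n → Fin d → ℝ := fun i => φ (Xi i) (Ai i) with hφidef
  set Λ : Matrix (Fin d) (Fin d) ℝ := covMat β φi with hΛdef
  set M : Matrix (Fin d) (Fin d) ℝ := Λ⁻¹ with hMdef
  set Cval : ℝ := 6 * β * ((d : ℝ) + Dθ ^ 2) + 3 * (d : ℝ) * (1 + R * Dθ) ^ 2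
      + 3 * γ ^ 2 * (d : ℝ) * R ^ 2 * Dθ ^ 2 with hCdef
  have hΛsy : Λᵀ = Λ := covMat_transpose β φi
  have hΛpd : Λ.PosDef := covMat_posDef hβ φi
  have hdet : IsUnit Λ.det := isUnit_iff_ne_zero.mpr hΛpd.det_pos.ne'
  have hMsy : Mᵀ = M := by rw [hMdef, Matrix.transpose_nonsing_inv, hΛsy]
  have hMΛ : M * Λ = 1 := Matrix.nonsing_inv_mul Λ hdet
  have hMpsd : ∀ u : Fin d → ℝ, 0 ≤ u ⬝ᵥ M *ᵥ u := fun u => by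
    rw [hMdef]
    simpa using hΛpd.inv.posSemidef.dotProduct_mulVec_nonneg u
  have hMΛv : ∀ u : Fin d → ℝ, M *ᵥ (Λ *ᵥ u) = u := fun u => by
    rw [Matrix.mulVec_mulVec, hMΛ, Matrix.one_mulVec]
  -- bound on the gradient norm
  have hC : ∀ t, (g t) ⬝ᵥ Λ *ᵥ (g t) ≤ Cval := by
    intro t
    have hv : ∀ i, |vparam φ (θ t) (π t) (Xs i)| ≤ R * Dθ := by
      intro i
      unfold vparam
      calc |∑ a, π t (Xs i) a * dotp (θ t) (φ (Xs i) a)|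
          ≤ ∑ a, |π t (Xs i) a * dotp (θ t) (φ (Xs i) a)| := Finset.abs_sum_le_sum_abs _ _
        _ ≤ ∑ a, π t (Xs i) a * (R * Dθ) := by
            apply Finset.sum_le_sum; intro a _
            rw [abs_mul, abs_of_nonneg ((hπ t).1 _ _)]
            refine mul_le_mul_of_nonneg_left ?_ ((hπ t).1 _ _)
            calc |dotp (θ t) (φ (Xs i) a)| ≤ Dθ * R := abs_dotp_le hD0 hR0 (hθ t) (hφ _ _)
              _ = R * Dθ := mul_comm _ _
        _ = R * Dθ := by rw [← Finset.sum_mul, (hπ t).2, one_mul]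
    rw [hΛdef, hCdef]
    exact gC_bound hn hβ hR0 hD0 φi (fun i => hφ (Xi i) (Ai i)) omg homg hrw (θ t) (hθ t)
      (fun i => vparam φ (θ t) (π t) (Xs i)) hv (g t) (hg t)
  -- per-step inequality
  have hstep : ∀ t, 1 ≤ t →
      (lamstar - lam t) ⬝ᵥ g t
        ≤ (2*η)⁻¹ * ((lamstar - lam t) ⬝ᵥ M *ᵥ (lamstar - lam t)
              - (lamstar - lam (t+1)) ⬝ᵥ M *ᵥ (lamstar - lam (t+1)))
          + (ϱ/2 * (lamstar ⬝ᵥ M *ᵥ lamstar) + η/2 * Cval)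
          - ϱ/2 * ((lam (t+1)) ⬝ᵥ M *ᵥ (lam (t+1))) := by
    intro t ht
    -- first-order optimality of the update
    have hL : ∀ u : Fin d → ℝ,
        0 ≤ -(u ⬝ᵥ g t) + η⁻¹ * ((lam (t+1) - lam t) ⬝ᵥ M *ᵥ u)
            + ϱ * ((lam (t+1)) ⬝ᵥ M *ᵥ u) := by
      intro u
      set Lu : ℝ := -(u ⬝ᵥ g t) + η⁻¹ * ((lam (t+1) - lam t) ⬝ᵥ M *ᵥ u)
            + ϱ * ((lam (t+1)) ⬝ᵥ M *ᵥ u) with hLu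
      have hQu : 0 ≤ u ⬝ᵥ M *ᵥ u := hMpsd u
      set c : ℝ := (2*η)⁻¹ + ϱ/2 with hc
      have hcpos : (0:ℝ) < c := by rw [hc]; positivity
      have key : ∀ s : ℝ, 0 ≤ s * Lu + s^2 * (c * (u ⬝ᵥ M *ᵥ u)) := by
        intro s
        have h := hupd t ht (lam (t+1) + s • u)
        simp only [wnormSq_eq, dotp_eq_dot] at h
        have e0 : (lam (t+1) + s • u) ⬝ᵥ g t
            = (lam (t+1)) ⬝ᵥ g t + s * (u ⬝ᵥ g t) := by
          rw [add_dotProduct, smul_dotProduct, smul_eq_mul]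
        have e1 : lam (t+1) + s • u - lam t = (lam (t+1) - lam t) + s • u := by abel
        have e2 : ((lam (t+1) - lam t) + s • u) ⬝ᵥ M *ᵥ ((lam (t+1) - lam t) + s • u)
            = (lam (t+1) - lam t) ⬝ᵥ M *ᵥ (lam (t+1) - lam t)
              + 2*(s*((lam (t+1) - lam t) ⬝ᵥ M *ᵥ u)) + s^2 * (u ⬝ᵥ M *ᵥ u) := by
          rw [quad_add hMsy, quad_smul, Matrix.mulVec_smul, dotProduct_smul,
            smul_eq_mul]
        have e3 : (lam (t+1) + s • u) ⬝ᵥ M *ᵥ (lam (t+1) + s • u)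
            = (lam (t+1)) ⬝ᵥ M *ᵥ (lam (t+1))
              + 2*(s*((lam (t+1)) ⬝ᵥ M *ᵥ u)) + s^2 * (u ⬝ᵥ M *ᵥ u) := by
          rw [quad_add hMsy, quad_smul, Matrix.mulVec_smul, dotProduct_smul,
            smul_eq_mul]
        rw [e0, e1, e2, e3] at h
        have hinv : η⁻¹ = 2*(2*η)⁻¹ := by
          rw [mul_inv]; ring
        rw [hLu, hc, hinv]
        linarith [h]
      by_contra hneg
      push_neg at hneg
      set D : ℝ := c * (u ⬝ᵥ M *ᵥ u) + 1 with hD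
      have hDpos : 0 < D := by
        rw [hD]; nlinarith [mul_nonneg hcpos.le hQu]
      have hs := key (-Lu / D)
      have hcQ : c * (u ⬝ᵥ M *ᵥ u) = D - 1 := by rw [hD]; ring
      have e : (-Lu/D) * Lu + (-Lu/D)^2 * (c * (u ⬝ᵥ M *ᵥ u)) = -(Lu^2) / D^2 := by
        rw [hcQ]
        field_simp
        ring
      rw [e] at hs
      have h8 : 0 < Lu^2 := by nlinarith [hneg]
      have h9 : -(Lu^2) / D^2 < 0 := div_neg_of_neg_of_pos (by linarith) (by positivity)
      linarith
    -- Young / Cauchy-Schwarz step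
    have hYoung : (lam (t+1) - lam t) ⬝ᵥ g t
        ≤ (2*η)⁻¹ * ((lam (t+1) - lam t) ⬝ᵥ M *ᵥ (lam (t+1) - lam t)) + η/2 * Cval := by
      have h0 := hMpsd ((lam (t+1) - lam t) - η • (Λ *ᵥ g t))
      rw [quad_sub hMsy] at h0
      have hb : (lam (t+1) - lam t) ⬝ᵥ M *ᵥ (η • (Λ *ᵥ g t))
          = η * ((lam (t+1) - lam t) ⬝ᵥ g t) := by
        rw [Matrix.mulVec_smul, dotProduct_smul, hMΛv, smul_eq_mul]
      have hqg : (η • (Λ *ᵥ g t)) ⬝ᵥ M *ᵥ (η • (Λ *ᵥ g t))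
          = η^2 * ((g t) ⬝ᵥ Λ *ᵥ (g t)) := by
        rw [quad_smul, hMΛv (g t), dotProduct_comm]
      rw [hb, hqg] at h0
      have h1 : 0 ≤ (2*η)⁻¹ * ((lam (t+1) - lam t) ⬝ᵥ M *ᵥ (lam (t+1) - lam t)
          - 2*(η*((lam (t+1) - lam t) ⬝ᵥ g t)) + η^2 * ((g t) ⬝ᵥ Λ *ᵥ (g t))) :=
        mul_nonneg (by positivity) h0
      have h2 : (2*η)⁻¹ * ((lam (t+1) - lam t) ⬝ᵥ M *ᵥ (lam (t+1) - lam t)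
          - 2*(η*((lam (t+1) - lam t) ⬝ᵥ g t)) + η^2 * ((g t) ⬝ᵥ Λ *ᵥ (g t)))
          = (2*η)⁻¹ * ((lam (t+1) - lam t) ⬝ᵥ M *ᵥ (lam (t+1) - lam t))
            - (lam (t+1) - lam t) ⬝ᵥ g t + η/2 * ((g t) ⬝ᵥ Λ *ᵥ (g t)) := by
        field_simp
      rw [h2] at h1
      have h3 := mul_le_mul_of_nonneg_left (hC t) (by positivity : (0:ℝ) ≤ η/2)
      linarith
    -- three-point identities
    have hL1 := hL (lamstar - lam (t+1))
    have e4 := quad_add hMsy (lam (t+1) - lam t) (lamstar - lam (t+1))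
    rw [show lam (t+1) - lam t + (lamstar - lam (t+1)) = lamstar - lam t from by abel] at e4
    have e5 := quad_add hMsy (lam (t+1)) (lamstar - lam (t+1))
    rw [show lam (t+1) + (lamstar - lam (t+1)) = lamstar from by abel] at e5
    have e6 : (lamstar - lam t) ⬝ᵥ g t
        = (lamstar - lam (t+1)) ⬝ᵥ g t + (lam (t+1) - lam t) ⬝ᵥ g t := by
      rw [show lamstar - lam t = (lamstar - lam (t+1)) + (lam (t+1) - lam t) from by abel,
        add_dotProduct]
    have hB1 : η⁻¹ * ((lam (t+1) - lam t) ⬝ᵥ M *ᵥ (lamstar - lam (t+1)))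
        = (2*η)⁻¹ * ((lamstar - lam t) ⬝ᵥ M *ᵥ (lamstar - lam t)
            - (lam (t+1) - lam t) ⬝ᵥ M *ᵥ (lam (t+1) - lam t)
            - (lamstar - lam (t+1)) ⬝ᵥ M *ᵥ (lamstar - lam (t+1))) := by
      have h2B : 2 * ((lam (t+1) - lam t) ⬝ᵥ M *ᵥ (lamstar - lam (t+1)))
          = (lamstar - lam t) ⬝ᵥ M *ᵥ (lamstar - lam t)
            - (lam (t+1) - lam t) ⬝ᵥ M *ᵥ (lam (t+1) - lam t)
            - (lamstar - lam (t+1)) ⬝ᵥ M *ᵥ (lamstar - lam (t+1)) := by linarith [e4]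
      calc η⁻¹ * ((lam (t+1) - lam t) ⬝ᵥ M *ᵥ (lamstar - lam (t+1)))
          = (2*η)⁻¹ * (2 * ((lam (t+1) - lam t) ⬝ᵥ M *ᵥ (lamstar - lam (t+1)))) := by
            rw [mul_inv]; ring
        _ = _ := by rw [h2B]
    have hB2 : ϱ * ((lam (t+1)) ⬝ᵥ M *ᵥ (lamstar - lam (t+1)))
        = ϱ/2 * (lamstar ⬝ᵥ M *ᵥ lamstar
            - (lam (t+1)) ⬝ᵥ M *ᵥ (lam (t+1))
            - (lamstar - lam (t+1)) ⬝ᵥ M *ᵥ (lamstar - lam (t+1))) := by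
      have h2B : 2 * ((lam (t+1)) ⬝ᵥ M *ᵥ (lamstar - lam (t+1)))
          = lamstar ⬝ᵥ M *ᵥ lamstar
            - (lam (t+1)) ⬝ᵥ M *ᵥ (lam (t+1))
            - (lamstar - lam (t+1)) ⬝ᵥ M *ᵥ (lamstar - lam (t+1)) := by linarith [e5]
      calc ϱ * ((lam (t+1)) ⬝ᵥ M *ᵥ (lamstar - lam (t+1)))
          = ϱ/2 * (2 * ((lam (t+1)) ⬝ᵥ M *ᵥ (lamstar - lam (t+1)))) := by ring
        _ = _ := by rw [h2B]
    rw [hB1, hB2] at hL1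
    have hQc : 0 ≤ (lamstar - lam (t+1)) ⬝ᵥ M *ᵥ (lamstar - lam (t+1)) := hMpsd _
    have hdrop : 0 ≤ ϱ/2 * ((lamstar - lam (t+1)) ⬝ᵥ M *ᵥ (lamstar - lam (t+1))) :=
      mul_nonneg (by positivity) hQc
    rw [e6]
    linarith [hL1, hYoung, hdrop]
  -- summation and telescoping
  have htel := sum_Icc_telescope
      (fun t => (lamstar - lam t) ⬝ᵥ M *ᵥ (lamstar - lam t)) T
  have hQ1 : (lamstar - lam 1) ⬝ᵥ M *ᵥ (lamstar - lam 1) = lamstar ⬝ᵥ M *ᵥ lamstar := by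
    rw [hlam1, sub_zero]
  have hsum : ∑ t ∈ Finset.Icc 1 T, (lamstar - lam t) ⬝ᵥ g t
      ≤ (2*η)⁻¹ * (lamstar ⬝ᵥ M *ᵥ lamstar
            - (lamstar - lam (T+1)) ⬝ᵥ M *ᵥ (lamstar - lam (T+1)))
        + (T:ℝ) * (ϱ/2 * (lamstar ⬝ᵥ M *ᵥ lamstar) + η/2 * Cval)
        - ϱ/2 * ∑ t ∈ Finset.Icc 1 T, (lam (t+1)) ⬝ᵥ M *ᵥ (lam (t+1)) := by
    have hb : ∑ t ∈ Finset.Icc 1 T, (lamstar - lam t) ⬝ᵥ g t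
        ≤ ∑ t ∈ Finset.Icc 1 T,
            ((2*η)⁻¹ * ((lamstar - lam t) ⬝ᵥ M *ᵥ (lamstar - lam t)
                - (lamstar - lam (t+1)) ⬝ᵥ M *ᵥ (lamstar - lam (t+1)))
              + (ϱ/2 * (lamstar ⬝ᵥ M *ᵥ lamstar) + η/2 * Cval)
              - ϱ/2 * ((lam (t+1)) ⬝ᵥ M *ᵥ (lam (t+1)))) :=
      Finset.sum_le_sum (fun t htm => hstep t (Finset.mem_Icc.mp htm).1)
    refine hb.trans (le_of_eq ?_)
    rw [Finset.sum_sub_distrib, Finset.sum_add_distrib, ← Finset.mul_sum, ← Finset.mul_sum,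
      Finset.sum_const, htel, hQ1, Nat.card_Icc, nsmul_eq_mul]
    simp only [Nat.add_sub_cancel]
  have hshift : ∑ t ∈ Finset.Icc 1 T, (lam t) ⬝ᵥ M *ᵥ (lam t)
      ≤ ∑ t ∈ Finset.Icc 1 T, (lam (t+1)) ⬝ᵥ M *ᵥ (lam (t+1)) := by
    have htel2 := sum_Icc_telescope (fun t => (lam t) ⬝ᵥ M *ᵥ (lam t)) T
    rw [Finset.sum_sub_distrib] at htel2
    have h1 : (lam 1) ⬝ᵥ M *ᵥ (lam 1) = 0 := by rw [hlam1]; simp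
    have h2 : 0 ≤ (lam (T+1)) ⬝ᵥ M *ᵥ (lam (T+1)) := hMpsd _
    linarith [htel2]
  -- conclusion
  simp only [dotp_eq_dot, wnormSq_eq]
  have hS2 : ∑ t ∈ Finset.Icc 1 T, (lamstar - lam t) ⬝ᵥ g t
      ≤ (2*η)⁻¹ * (lamstar ⬝ᵥ M *ᵥ lamstar)
        + (T:ℝ) * (ϱ/2 * (lamstar ⬝ᵥ M *ᵥ lamstar) + η/2 * Cval)
        - ϱ/2 * ∑ t ∈ Finset.Icc 1 T, (lam t) ⬝ᵥ M *ᵥ (lam t) := by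
    have hd1 := mul_le_mul_of_nonneg_left hshift (by positivity : (0:ℝ) ≤ ϱ/2)
    have hd2 : 0 ≤ (2*η)⁻¹ * ((lamstar - lam (T+1)) ⬝ᵥ M *ᵥ (lamstar - lam (T+1))) :=
      mul_nonneg (by positivity) (hMpsd _)
    linarith [hsum]
  have hTne : (T:ℝ) ≠ 0 := ne_of_gt hT0
  have hηne : η ≠ 0 := ne_of_gt hη
  calc (T:ℝ)⁻¹ * ∑ t ∈ Finset.Icc 1 T, (lamstar - lam t) ⬝ᵥ g t
      ≤ (T:ℝ)⁻¹ * ((2*η)⁻¹ * (lamstar ⬝ᵥ M *ᵥ lamstar)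
        + (T:ℝ) * (ϱ/2 * (lamstar ⬝ᵥ M *ᵥ lamstar) + η/2 * Cval)
        - ϱ/2 * ∑ t ∈ Finset.Icc 1 T, (lam t) ⬝ᵥ M *ᵥ (lam t)) :=
        mul_le_mul_of_nonneg_left hS2 (by positivity)
    _ = ((2*η*(T:ℝ))⁻¹ + ϱ/2) * (lamstar ⬝ᵥ M *ᵥ lamstar) + η * Cval / 2
        - ϱ/(2*(T:ℝ)) * ∑ t ∈ Finset.Icc 1 T, (lam t) ⬝ᵥ M *ᵥ (lam t) := by
        field_simp
        ring


end Paper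
end
end
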